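/- Let m > 0, λ ∈ (−m, m) and p > 1. If Ψ₁ = (φ₁, χ₁)ᵀ and Ψ₂ = (φ₂, χ₂)ᵀ are two continuously differentiable, square-integrable, not identically zero solutions Ψ : ℝ → ℂ² of the one-dimensional nonlinear Dirac system φ' = −(λ + m + (|φ|² + |χ|²)^{1/(p−1)}) χ, χ' = (λ − m + (|φ|² + |χ|²)^{1/(p−1)}) φ, then there exist θ ∈ ℝ and x₀ ∈ ℝ such that Ψ₂(x) = e^{iθ} Ψ₁(x − x₀) for all x ∈ ℝ. In other words, the nonzero L² solution of this system is unique up to a phase factor and a translation. -/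

import Mathlib

open MeasureTheory Real Set

namespace NLD

structure Sol (m lam p : ℝ) (φ χ : ℝ → ℂ) : Prop where
  regφ : ContDiff ℝ 1 φ
  regχ : ContDiff ℝ 1 χ
  odeφ : ∀ x, deriv φ x
      = -(((lam + m + (‖φ x‖ ^ 2 + ‖χ x‖ ^ 2) ^ (1 / (p - 1)) : ℝ)) : ℂ) * χ x
  odeχ : ∀ x, deriv χ x
      = (((lam - m + (‖φ x‖ ^ 2 + ‖χ x‖ ^ 2) ^ (1 / (p - 1)) : ℝ)) : ℂ) * φ x

variable {m lam p : ℝ} {φ χ : ℝ → ℂ}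

noncomputable def sf (φ χ : ℝ → ℂ) (x : ℝ) : ℝ := ‖φ x‖ ^ 2 + ‖χ x‖ ^ 2

noncomputable def af (m lam p : ℝ) (φ χ : ℝ → ℂ) (x : ℝ) : ℝ :=
  lam + m + (sf φ χ x) ^ (1 / (p - 1))

noncomputable def bf (m lam p : ℝ) (φ χ : ℝ → ℂ) (x : ℝ) : ℝ :=
  lam - m + (sf φ χ x) ^ (1 / (p - 1))

noncomputable def Rf (φ χ : ℝ → ℂ) (x : ℝ) : ℝ := ((starRingEnd ℂ) (φ x) * χ x).re

theorem conj_mul_re_eq (z : ℂ) : ((starRingEnd ℂ) z * z).re = ‖z‖ ^ 2 := by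
  simp [Complex.mul_re, Complex.sq_norm, Complex.normSq_apply]

theorem conj_mul_re_comm (z w : ℂ) : ((starRingEnd ℂ) z * w).re = ((starRingEnd ℂ) w * z).re := by
  simp [Complex.mul_re]; ring

theorem abs_conj_mul_re_le (z w : ℂ) :
    |((starRingEnd ℂ) z * w).re| ≤ (‖z‖ ^ 2 + ‖w‖ ^ 2) / 2 := by
  have h1 : |((starRingEnd ℂ) z * w).re| ≤ ‖(starRingEnd ℂ) z * w‖ := Complex.abs_re_le_norm _
  have h2 : ‖(starRingEnd ℂ) z * w‖ = ‖z‖ * ‖w‖ := by rw [norm_mul]; simp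
  nlinarith [sq_nonneg (‖z‖ - ‖w‖), norm_nonneg z, norm_nonneg w]

theorem abs_conj_mul_im_le (z w : ℂ) :
    |((starRingEnd ℂ) z * w).im| ≤ (‖z‖ ^ 2 + ‖w‖ ^ 2) / 2 := by
  have h1 : |((starRingEnd ℂ) z * w).im| ≤ ‖(starRingEnd ℂ) z * w‖ := Complex.abs_im_le_norm _
  have h2 : ‖(starRingEnd ℂ) z * w‖ = ‖z‖ * ‖w‖ := by rw [norm_mul]; simp
  nlinarith [sq_nonneg (‖z‖ - ‖w‖), norm_nonneg z, norm_nonneg w]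

theorem Sol.hasDerivAt_phi (h : Sol m lam p φ χ) (x : ℝ) :
    HasDerivAt φ (-(af m lam p φ χ x : ℂ) * χ x) x := by
  have := ((h.regφ.differentiable one_ne_zero) x).hasDerivAt
  rwa [h.odeφ x] at this

theorem Sol.hasDerivAt_chi (h : Sol m lam p φ χ) (x : ℝ) :
    HasDerivAt χ ((bf m lam p φ χ x : ℂ) * φ x) x := by
  have := ((h.regχ.differentiable one_ne_zero) x).hasDerivAt
  rwa [h.odeχ x] at this

theorem hasDerivAt_normSq {f : ℝ → ℂ} {f' : ℂ} {x : ℝ} (hf : HasDerivAt f f' x) :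
    HasDerivAt (fun y => ‖f y‖ ^ 2) (2 * ((starRingEnd ℂ) (f x) * f').re) x := by
  have h1 : HasDerivAt (fun y => (starRingEnd ℂ) (f y) * f y)
      ((starRingEnd ℂ) f' * f x + (starRingEnd ℂ) (f x) * f') x := hf.star.mul hf
  have h2 := (Complex.reCLM.hasFDerivAt
      (x := (starRingEnd ℂ) (f x) * f x)).comp_hasDerivAt x h1
  have h3 : (fun y => ‖f y‖ ^ 2) = (⇑Complex.reCLM ∘ fun y => (starRingEnd ℂ) (f y) * f y) := by
    funext y; simp [Function.comp, Complex.mul_re, Complex.sq_norm,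
      Complex.normSq_apply]
  rw [h3]
  convert h2 using 1
  · rfl
  · rfl
  simp only [ContinuousLinearMap.map_add, Complex.reCLM_apply, Complex.add_re]
  simp [Complex.mul_re]
  ring

/-- derivative of `‖φ‖²` -/
theorem Sol.hasDerivAt_normSq_phi (h : Sol m lam p φ χ) (x : ℝ) :
    HasDerivAt (fun y => ‖φ y‖ ^ 2) (-2 * af m lam p φ χ x * Rf φ χ x) x := by
  have := hasDerivAt_normSq (h.hasDerivAt_phi x)
  convert this using 1
  have : ((starRingEnd ℂ) (φ x) * (-(af m lam p φ χ x : ℂ) * χ x)).re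
      = -(af m lam p φ χ x) * ((starRingEnd ℂ) (φ x) * χ x).re := by
    have : (starRingEnd ℂ) (φ x) * (-(af m lam p φ χ x : ℂ) * χ x)
        = ((-(af m lam p φ χ x) : ℝ) : ℂ) * ((starRingEnd ℂ) (φ x) * χ x) := by push_cast; ring
    rw [this, Complex.re_ofReal_mul]
  rw [this, Rf]; ring

theorem Sol.hasDerivAt_normSq_chi (h : Sol m lam p φ χ) (x : ℝ) :
    HasDerivAt (fun y => ‖χ y‖ ^ 2) (2 * bf m lam p φ χ x * Rf φ χ x) x := by
  have := hasDerivAt_normSq (h.hasDerivAt_chi x)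
  convert this using 1
  have h4 : ((starRingEnd ℂ) (χ x) * ((bf m lam p φ χ x : ℂ) * φ x)).re
      = (bf m lam p φ χ x) * ((starRingEnd ℂ) (χ x) * φ x).re := by
    have : (starRingEnd ℂ) (χ x) * ((bf m lam p φ χ x : ℂ) * φ x)
        = ((bf m lam p φ χ x : ℝ) : ℂ) * ((starRingEnd ℂ) (χ x) * φ x) := by push_cast; ring
    rw [this, Complex.re_ofReal_mul]
  rw [h4, conj_mul_re_comm, Rf]; ring

theorem Sol.hasDerivAt_s (h : Sol m lam p φ χ) (x : ℝ) :
    HasDerivAt (sf φ χ) (-4 * m * Rf φ χ x) x := by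
  have := (h.hasDerivAt_normSq_phi x).add (h.hasDerivAt_normSq_chi x)
  have hval : -2 * af m lam p φ χ x * Rf φ χ x + 2 * bf m lam p φ χ x * Rf φ χ x
      = -4 * m * Rf φ χ x := by
    simp only [af, bf]; ring
  rw [hval] at this
  exact this


-- abstract gronwall exercise: f : ℝ → ℝ, nonneg, |f'| ≤ K f everywhere ⇒ f y ≤ f x exp(K |y-x|)
theorem my_gron {f f' : ℝ → ℝ} {K : ℝ} (hK : 0 ≤ K)
    (hd : ∀ x, HasDerivAt f (f' x) x)
    (hnn : ∀ x, 0 ≤ f x)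
    (hb : ∀ x, |f' x| ≤ K * f x) (x y : ℝ) :
    f y ≤ f x * Real.exp (K * |y - x|) := by
  have main : ∀ (g g' : ℝ → ℝ), (∀ t, HasDerivAt g (g' t) t) → (∀ t, 0 ≤ g t) →
      (∀ t, |g' t| ≤ K * g t) → ∀ t : ℝ, 0 ≤ t → g t ≤ g 0 * Real.exp (K * t) := by
    intro g g' hgd hgn hgb t ht
    have := norm_le_gronwallBound_of_norm_deriv_right_le (f := g) (f' := g') (δ := g 0)
      (K := K) (ε := 0) (a := 0) (b := t)
      (fun u _ => (hgd u).continuousAt.continuousWithinAt)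
      (fun u _ => (hgd u).hasDerivWithinAt)
      (by rw [Real.norm_of_nonneg (hgn 0)])
      (fun u _ => by
        rw [Real.norm_of_nonneg (hgn u), Real.norm_eq_abs, add_zero]
        exact hgb u)
      t ⟨ht, le_rfl⟩
    rwa [Real.norm_of_nonneg (hgn t), gronwallBound_ε0, sub_zero] at this
  rcases le_total x y with hxy | hxy
  · have := main (fun t => f (x + t)) (fun t => f' (x + t))
      (fun t => ((hd (x + t)).comp t (by simpa using (hasDerivAt_id t).const_add x)).congr_deriv
        (by ring))
      (fun t => hnn _) (fun t => hb _) (y - x) (by linarith)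
    simpa [abs_of_nonneg (by linarith : (0:ℝ) ≤ y - x)] using this
  · have := main (fun t => f (x - t)) (fun t => -f' (x - t))
      (fun t => ((hd (x - t)).comp t (by simpa using (hasDerivAt_id t).const_sub x)).congr_deriv
        (by ring))
      (fun t => hnn _) (fun t => by rw [abs_neg]; exact hb _) (x - y) (by linarith)
    simpa [abs_of_nonpos (by linarith : y - x ≤ 0)] using this


variable (hm : 0 < m) (hp : 1 < p)

theorem Rf_abs_le (x : ℝ) : |Rf φ χ x| ≤ sf φ χ x / 2 := by
  have := abs_conj_mul_re_le (φ x) (χ x)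
  simpa [Rf, sf] using this

theorem sf_nonneg (x : ℝ) : 0 ≤ sf φ χ x := by unfold sf; positivity

/-- Pointwise comparison of `s` at two points. -/
theorem Sol.s_le (h : Sol m lam p φ χ) (hm : 0 < m) (x y : ℝ) :
    sf φ χ y ≤ sf φ χ x * Real.exp (2 * m * |y - x|) := by
  refine my_gron (by nlinarith) (fun t => h.hasDerivAt_s t) (fun t => sf_nonneg t) ?_ x y
  intro t
  have h1 := Rf_abs_le (φ := φ) (χ := χ) t
  have : |(-4 : ℝ) * m * Rf φ χ t| = 4 * m * |Rf φ χ t| := by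
    rw [abs_mul, abs_mul]
    simp [abs_of_pos hm]
  rw [this]
  nlinarith [abs_nonneg (Rf φ χ t)]

theorem Sol.s_pos (h : Sol m lam p φ χ) (hm : 0 < m)
    (hne : ¬ (∀ x, φ x = 0 ∧ χ x = 0)) (x : ℝ) : 0 < sf φ χ x := by
  rcases (sf_nonneg (φ := φ) (χ := χ) x).lt_or_eq with h' | h'
  · exact h'
  exfalso
  apply hne
  intro y
  have h2 := h.s_le hm x y
  rw [← h'] at h2
  have h3 : sf φ χ y = 0 := le_antisymm (by simpa using h2) (sf_nonneg y)
  constructor <;>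
  · have h4 : ‖φ y‖ ^ 2 + ‖χ y‖ ^ 2 = 0 := h3
    rw [← norm_eq_zero]
    nlinarith [norm_nonneg (φ y), norm_nonneg (χ y), sq_nonneg (‖φ y‖), sq_nonneg (‖χ y‖)]

theorem Sol.s_integrable (h : Sol m lam p φ χ) (hφ : MemLp φ 2 volume)
    (hχ : MemLp χ 2 volume) : Integrable (sf φ χ) volume := by
  have h1 : Integrable (fun x => ‖φ x‖ ^ (2:ℝ)) volume :=
    hφ.integrable_norm_rpow (by norm_num) (by norm_num)
  have h2 : Integrable (fun x => ‖χ x‖ ^ (2:ℝ)) volume :=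
    hχ.integrable_norm_rpow (by norm_num) (by norm_num)
  have e1 : (fun x => ‖φ x‖ ^ (2:ℝ)) = fun x => ‖φ x‖ ^ 2 := by
    funext x; rw [show (2:ℝ) = ((2:ℕ) : ℝ) by norm_num, Real.rpow_natCast]
  have e2 : (fun x => ‖χ x‖ ^ (2:ℝ)) = fun x => ‖χ x‖ ^ 2 := by
    funext x; rw [show (2:ℝ) = ((2:ℕ) : ℝ) by norm_num, Real.rpow_natCast]
  rw [e1] at h1; rw [e2] at h2
  exact h1.add h2

theorem Sol.exists_s_lt (h : Sol m lam p φ χ) (hφ : MemLp φ 2 volume)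
    (hχ : MemLp χ 2 volume) {ε : ℝ} (hε : 0 < ε) : ∃ x, sf φ χ x < ε := by
  by_contra hc
  push_neg at hc
  have hεint : Integrable (fun _ : ℝ => ε) volume := by
    refine (h.s_integrable hφ hχ).mono' aestronglyMeasurable_const ?_
    exact ae_of_all _ fun x => by rw [Real.norm_of_nonneg hε.le]; exact hc x
  rw [integrable_const_iff] at hεint
  rcases hεint with h' | h'
  · exact hε.ne' h'
  · haveI := h'; exact measure_ne_top (volume : Measure ℝ) univ Real.volume_univ

noncomputable def Wf (φ χ : ℝ → ℂ) (x : ℝ) : ℂ := (starRingEnd ℂ) (φ x) * χ x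

theorem Sol.hasDerivAt_W (h : Sol m lam p φ χ) (x : ℝ) :
    HasDerivAt (Wf φ χ)
      ((bf m lam p φ χ x * ‖φ x‖ ^ 2 - af m lam p φ χ x * ‖χ x‖ ^ 2 : ℝ) : ℂ) x := by
  have h1 := (h.hasDerivAt_phi x).star.mul (h.hasDerivAt_chi x)
  convert h1 using 1
  · rfl
  · rfl
  simp only [← starRingEnd_apply]
  rw [show (starRingEnd ℂ) (-(af m lam p φ χ x : ℂ) * χ x) * χ x
        + (starRingEnd ℂ) (φ x) * ((bf m lam p φ χ x : ℂ) * φ x)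
      = (starRingEnd ℂ) (-(af m lam p φ χ x : ℂ)) * ((starRingEnd ℂ) (χ x) * χ x)
        + (bf m lam p φ χ x : ℂ) * ((starRingEnd ℂ) (φ x) * φ x) by
    simp only [map_mul, map_neg]; ring,
    Complex.conj_mul', Complex.conj_mul']
  simp only [map_neg, Complex.conj_ofReal]
  push_cast
  ring

theorem Sol.W_im_zero (h : Sol m lam p φ χ) (hφ : MemLp φ 2 volume)
    (hχ : MemLp χ 2 volume) (x : ℝ) : (Wf φ χ x).im = 0 := by
  have hW : ∀ y, HasDerivAt (fun t => (Wf φ χ t).im) 0 y := by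
    intro y
    have h1 := (Complex.imCLM.hasFDerivAt (x := Wf φ χ y)).comp_hasDerivAt y (h.hasDerivAt_W y)
    have h2 : HasDerivAt (fun t => (Wf φ χ t).im)
        (Complex.imCLM ((bf m lam p φ χ y * ‖φ y‖ ^ 2 - af m lam p φ χ y * ‖χ y‖ ^ 2 : ℝ) : ℂ))
        y := h1
    have h3 : Complex.imCLM ((bf m lam p φ χ y * ‖φ y‖ ^ 2
        - af m lam p φ χ y * ‖χ y‖ ^ 2 : ℝ) : ℂ) = 0 := by
      simp only [Complex.imCLM_apply, Complex.ofReal_im]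
    rwa [h3] at h2
  have hconst : ∀ y z : ℝ, (Wf φ χ y).im = (Wf φ χ z).im := by
    intro y z
    exact is_const_of_deriv_eq_zero (fun t => (hW t).differentiableAt)
      (fun t => (hW t).deriv) y z
  by_contra hc
  have hpos : 0 < |(Wf φ χ x).im| := abs_pos.mpr hc
  obtain ⟨y, hy⟩ := h.exists_s_lt hφ hχ (show 0 < |(Wf φ χ x).im| from hpos)
  have hle : |(Wf φ χ y).im| ≤ sf φ χ y / 2 := by
    have := abs_conj_mul_im_le (φ y) (χ y)
    simpa [Wf, sf] using this
  rw [← hconst x y] at hle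
  have : sf φ χ y / 2 < |(Wf φ χ x).im| := by linarith
  linarith

/-- The conserved Hamiltonian. -/
noncomputable def Hf (m lam p : ℝ) (φ χ : ℝ → ℂ) (x : ℝ) : ℝ :=
  lam * sf φ χ x + (p - 1) / p * (sf φ χ x) ^ (p / (p - 1)) - m * (‖φ x‖ ^ 2 - ‖χ x‖ ^ 2)

theorem Sol.hasDerivAt_H (h : Sol m lam p φ χ) (hp : 1 < p) (x : ℝ)
    (hs : sf φ χ x ≠ 0) : HasDerivAt (Hf m lam p φ χ) 0 x := by
  have hds := h.hasDerivAt_s x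
  have hpow : HasDerivAt (fun y => (sf φ χ y) ^ (p / (p - 1)))
      (p / (p - 1) * (sf φ χ x) ^ (p / (p - 1) - 1) * (-4 * m * Rf φ χ x)) x := by
    have houter := Real.hasDerivAt_rpow_const (x := sf φ χ x) (p := p / (p - 1)) (Or.inl hs)
    exact houter.comp x hds
  have hν := (h.hasDerivAt_normSq_phi x).sub (h.hasDerivAt_normSq_chi x)
  have htot := ((hds.const_mul lam).add (hpow.const_mul ((p - 1) / p))).sub (hν.const_mul m)
  have hp0 : p ≠ 0 := by linarith
  have hp1 : p - 1 ≠ 0 := by linarith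
  have hexp : p / (p - 1) - 1 = 1 / (p - 1) := by
    field_simp; ring
  rw [hexp] at htot
  have hval : lam * (-4 * m * Rf φ χ x)
      + (p - 1) / p * (p / (p - 1) * (sf φ χ x) ^ (1 / (p - 1)) * (-4 * m * Rf φ χ x))
      - m * (-2 * af m lam p φ χ x * Rf φ χ x - 2 * bf m lam p φ χ x * Rf φ χ x) = 0 := by
    simp only [af, bf]
    field_simp
    ring
  rw [hval] at htot
  exact htot

theorem Sol.H_const (h : Sol m lam p φ χ) (hm : 0 < m) (hp : 1 < p)
    (hne : ¬ (∀ x, φ x = 0 ∧ χ x = 0)) (x y : ℝ) :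
    Hf m lam p φ χ x = Hf m lam p φ χ y :=
  is_const_of_deriv_eq_zero
    (fun t => (h.hasDerivAt_H hp t (h.s_pos hm hne t).ne').differentiableAt)
    (fun t => (h.hasDerivAt_H hp t (h.s_pos hm hne t).ne').deriv) x y

theorem Sol.H_zero (h : Sol m lam p φ χ) (hm : 0 < m) (hp : 1 < p)
    (hne : ¬ (∀ x, φ x = 0 ∧ χ x = 0)) (hφ : MemLp φ 2 volume)
    (hχ : MemLp χ 2 volume) (x : ℝ) : Hf m lam p φ χ x = 0 := by
  set C : ℝ := |lam| + (p - 1) / p + m with hC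
  have hCpos : 0 < C := by
    have : 0 < (p - 1) / p := div_pos (by linarith) (by linarith)
    have := abs_nonneg lam
    simp only [hC]; linarith
  have hbound : ∀ y, sf φ χ y ≤ 1 → |Hf m lam p φ χ y| ≤ C * sf φ χ y := by
    intro y hy1
    have hspos := h.s_pos hm hne y
    have h1 : |lam * sf φ χ y| ≤ |lam| * sf φ χ y := by
      rw [abs_mul, abs_of_nonneg hspos.le]
    have h2 : (sf φ χ y) ^ (p / (p - 1)) ≤ sf φ χ y := by
      have he : (1:ℝ) ≤ p / (p - 1) := by
        rw [le_div_iff₀ (by linarith)]; linarith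
      calc (sf φ χ y) ^ (p / (p - 1)) ≤ (sf φ χ y) ^ (1:ℝ) :=
            Real.rpow_le_rpow_of_exponent_ge hspos hy1 he
        _ = sf φ χ y := Real.rpow_one _
    have h3 : |‖φ y‖ ^ 2 - ‖χ y‖ ^ 2| ≤ sf φ χ y := by
      rw [abs_le]
      constructor <;> [skip; skip] <;>
        · simp only [sf]; nlinarith [sq_nonneg ‖φ y‖, sq_nonneg ‖χ y‖]
    have h4 : 0 < (sf φ χ y) ^ (p / (p - 1)) := Real.rpow_pos_of_pos hspos _
    have h5 : |m * (‖φ y‖ ^ 2 - ‖χ y‖ ^ 2)| ≤ m * sf φ χ y := by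
      rw [abs_mul, abs_of_pos hm]
      exact mul_le_mul_of_nonneg_left h3 hm.le
    have h6 : |Hf m lam p φ χ y| ≤ |lam * sf φ χ y|
        + (p - 1) / p * (sf φ χ y) ^ (p / (p - 1)) + |m * (‖φ y‖ ^ 2 - ‖χ y‖ ^ 2)| := by
      have hcp : 0 < (p-1)/p := div_pos (by linarith) (by linarith)
      rw [Hf]
      calc |lam * sf φ χ y + (p - 1) / p * sf φ χ y ^ (p / (p - 1))
            - m * (‖φ y‖ ^ 2 - ‖χ y‖ ^ 2)|
          ≤ |lam * sf φ χ y + (p - 1) / p * sf φ χ y ^ (p / (p - 1))|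
            + |m * (‖φ y‖ ^ 2 - ‖χ y‖ ^ 2)| := abs_sub _ _
        _ ≤ |lam * sf φ χ y| + |(p - 1) / p * sf φ χ y ^ (p / (p - 1))|
            + |m * (‖φ y‖ ^ 2 - ‖χ y‖ ^ 2)| := by
              have := abs_add_le (lam * sf φ χ y) ((p - 1) / p * sf φ χ y ^ (p / (p - 1)))
              linarith
        _ = |lam * sf φ χ y| + (p - 1) / p * sf φ χ y ^ (p / (p - 1))
            + |m * (‖φ y‖ ^ 2 - ‖χ y‖ ^ 2)| := by
              rw [abs_mul ((p - 1) / p) _, abs_of_pos hcp, abs_of_pos h4]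
    have hmul : (p - 1) / p * (sf φ χ y) ^ (p / (p - 1)) ≤ (p - 1) / p * sf φ χ y := by
      have hcp : (0:ℝ) ≤ (p-1)/p := (div_pos (by linarith) (by linarith)).le
      exact mul_le_mul_of_nonneg_left h2 hcp
    calc |Hf m lam p φ χ y| ≤ |lam * sf φ χ y|
          + (p - 1) / p * (sf φ χ y) ^ (p / (p - 1)) + |m * (‖φ y‖ ^ 2 - ‖χ y‖ ^ 2)| := h6
      _ ≤ |lam| * sf φ χ y + (p - 1) / p * sf φ χ y + m * sf φ χ y := by linarith
      _ = C * sf φ χ y := by rw [hC]; ring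
  by_contra hc
  have hpos : 0 < |Hf m lam p φ χ x| := abs_pos.mpr hc
  have hε : 0 < min 1 (|Hf m lam p φ χ x| / (2 * C)) := by
    apply lt_min one_pos; positivity
  obtain ⟨y, hy⟩ := h.exists_s_lt hφ hχ hε
  have hy1 : sf φ χ y ≤ 1 := le_of_lt (lt_of_lt_of_le hy (min_le_left _ _))
  have hy2 : sf φ χ y < |Hf m lam p φ χ x| / (2 * C) :=
    lt_of_lt_of_le hy (min_le_right _ _)
  have := hbound y hy1
  rw [← h.H_const hm hp hne x y] at this
  have : |Hf m lam p φ χ x| ≤ C * (|Hf m lam p φ χ x| / (2 * C)) := by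
    calc |Hf m lam p φ χ x| ≤ C * sf φ χ y := this
      _ ≤ C * (|Hf m lam p φ χ x| / (2 * C)) := by
          exact mul_le_mul_of_nonneg_left hy2.le hCpos.le
  rw [show C * (|Hf m lam p φ χ x| / (2 * C)) = |Hf m lam p φ χ x| / 2 by field_simp]
    at this
  linarith

theorem Sol.s_continuous (h : Sol m lam p φ χ) : Continuous (sf φ χ) :=
  ((h.regφ.continuous.norm.pow 2).add (h.regχ.continuous.norm.pow 2))

theorem Sol.tail (h : Sol m lam p φ χ) (hm : 0 < m) (hφ : MemLp φ 2 volume)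
    (hχ : MemLp χ 2 volume) {ε : ℝ} (hε : 0 < ε) :
    ∃ A : ℝ, 0 < A ∧ ∀ x, A ≤ |x| → sf φ χ x < ε := by
  classical
  set ε' : ℝ := ε * Real.exp (-(2 * m)) with hε'def
  have hε' : 0 < ε' := by positivity
  have hint := h.s_integrable hφ hχ
  have hT : Filter.Tendsto (fun N : ℝ => ∫ t in (-N)..N, sf φ χ t) Filter.atTop
      (nhds (∫ t, sf φ χ t)) :=
    MeasureTheory.intervalIntegral_tendsto_integral hint
      Filter.tendsto_neg_atTop_atBot Filter.tendsto_id
  have hev : ∀ᶠ N : ℝ in Filter.atTop,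
      (∫ t, sf φ χ t) - ε' < ∫ t in (-N)..N, sf φ χ t :=
    hT.eventually (eventually_gt_nhds (by linarith))
  obtain ⟨N, hN1, hN2⟩ := (hev.and (Filter.eventually_ge_atTop (1:ℝ))).exists
  have key : ∀ x : ℝ, (N ≤ x ∨ x + 1 ≤ -N) → ∫ t in x..(x+1), sf φ χ t < ε' := by
    intro x hx
    have hdisj : Disjoint (Ioc (-N) N) (Ioc x (x + 1)) := by
      rw [Set.disjoint_left]
      rintro t ⟨ht1, ht2⟩ ⟨ht3, ht4⟩
      rcases hx with hx | hx
      · linarith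
      · linarith
    have hsum : (∫ t in Ioc (-N) N, sf φ χ t) + ∫ t in Ioc x (x+1), sf φ χ t
        ≤ ∫ t, sf φ χ t := by
      rw [← MeasureTheory.setIntegral_union hdisj measurableSet_Ioc
        hint.integrableOn hint.integrableOn]
      exact MeasureTheory.setIntegral_le_integral hint
        (Filter.Eventually.of_forall fun t => sf_nonneg t)
    rw [intervalIntegral.integral_of_le (by linarith : -N ≤ N)] at hN1
    rw [intervalIntegral.integral_of_le (by linarith : x ≤ x + 1)]
    linarith
  refine ⟨N + 1, by linarith, fun x hx => ?_⟩
  have hxcase : N ≤ x ∨ x + 1 ≤ -N := by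
    rcases le_or_gt 0 x with hx0 | hx0
    · left; rw [abs_of_nonneg hx0] at hx; linarith
    · right; rw [abs_of_neg hx0] at hx; linarith
  have hlow : ∀ t ∈ Icc x (x + 1), sf φ χ x * Real.exp (-(2*m)) ≤ sf φ χ t := by
    rintro t ⟨ht1, ht2⟩
    have h1 := h.s_le hm t x
    have habs : |x - t| ≤ 1 := by rw [abs_le]; constructor <;> linarith
    have h2 : sf φ χ x ≤ sf φ χ t * Real.exp (2 * m * 1) := by
      calc sf φ χ x ≤ sf φ χ t * Real.exp (2 * m * |x - t|) := h1
        _ ≤ sf φ χ t * Real.exp (2 * m * 1) := by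
            apply mul_le_mul_of_nonneg_left _ (sf_nonneg t)
            exact Real.exp_le_exp.mpr (by nlinarith)
    have h3 : Real.exp (2*m*1) * Real.exp (-(2*m)) = 1 := by
      rw [← Real.exp_add]; norm_num
    nlinarith [Real.exp_pos (-(2*m)), sf_nonneg (φ := φ) (χ := χ) t]
  have hIle : sf φ χ x * Real.exp (-(2*m)) ≤ ∫ t in x..(x+1), sf φ χ t := by
    have hc : ∫ _t in x..(x+1), (sf φ χ x * Real.exp (-(2*m))) 
        = sf φ χ x * Real.exp (-(2*m)) := by
      rw [intervalIntegral.integral_const]; simp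
    rw [← hc]
    exact intervalIntegral.integral_mono_on (by linarith) intervalIntegrable_const
      (h.s_continuous.intervalIntegrable x (x+1)) hlow
  have h4 := key x hxcase
  have h5 : sf φ χ x * Real.exp (-(2*m)) < ε' := lt_of_le_of_lt hIle h4
  have h6 : Real.exp (-(2*m)) * Real.exp (2*m) = 1 := by rw [← Real.exp_add]; simp
  rw [hε'def] at h5
  exact lt_of_mul_lt_mul_right h5 (Real.exp_pos _).le

theorem Sol.exists_center (h : Sol m lam p φ χ) (hm : 0 < m) (hp : 1 < p)
    (hlam₁ : -m < lam) (hlam₂ : lam < m) (hne : ¬ (∀ x, φ x = 0 ∧ χ x = 0))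
    (hφ : MemLp φ 2 volume) (hχ : MemLp χ 2 volume) :
    ∃ c, χ c = 0 ∧ ‖φ c‖ ^ 2 = ((m - lam) * p / (p - 1)) ^ (p - 1 : ℝ) := by
  have hs0 : 0 < sf φ χ 0 := h.s_pos hm hne 0
  obtain ⟨A, hA, hAp⟩ := h.tail hm hφ hχ hs0
  obtain ⟨c, hcmem, hcmax⟩ := isCompact_Icc.exists_isMaxOn
    (⟨0, by constructor <;> linarith⟩ : (Icc (-A) A).Nonempty)
    (h.s_continuous.continuousOn)
  have hglob : ∀ y, sf φ χ y ≤ sf φ χ c := by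
    intro y
    rcases le_or_gt |y| A with hy | hy
    · exact hcmax (abs_le.mp hy |> fun ⟨h1, h2⟩ => ⟨h1, h2⟩)
    · have := hAp y hy.le
      have h0 := hcmax (show (0:ℝ) ∈ Icc (-A) A by constructor <;> linarith)
      calc sf φ χ y ≤ sf φ χ 0 := this.le
        _ ≤ sf φ χ c := h0
  have hloc : IsLocalMax (sf φ χ) c :=
    (isMaxOn_iff.mpr fun y _ => hglob y).isLocalMax Filter.univ_mem
  have hderiv0 : deriv (sf φ χ) c = 0 := hloc.deriv_eq_zero
  have hR : Rf φ χ c = 0 := by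
    have := (h.hasDerivAt_s c).deriv
    rw [hderiv0] at this
    nlinarith [this]
  have hW : Wf φ χ c = 0 := by
    apply Complex.ext
    · exact hR
    · exact h.W_im_zero hφ hχ c
  have hsc : 0 < sf φ χ c := h.s_pos hm hne c
  have hφχ : φ c = 0 ∨ χ c = 0 := by
    rcases mul_eq_zero.mp hW with h1 | h1
    · left; exact star_eq_zero.mp h1
    · right; exact h1
  have hH := h.H_zero hm hp hne hφ hχ c
  rw [Hf] at hH
  have hχc : χ c = 0 := by
    rcases hφχ with h1 | h1
    · exfalso
      have hφ0 : ‖φ c‖ ^ 2 = 0 := by rw [h1]; simp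
      have hsval : sf φ χ c = ‖χ c‖ ^ 2 := by rw [sf, hφ0]; ring
      have hχpos : 0 < ‖χ c‖ ^ 2 := hsval ▸ hsc
      have hrp : 0 < (‖χ c‖ ^ 2 : ℝ) ^ (p / (p - 1)) := Real.rpow_pos_of_pos hχpos _
      have hcp : 0 < (p - 1) / p := div_pos (by linarith) (by linarith)
      rw [hφ0, hsval] at hH
      nlinarith [hH, hχpos, hrp, hcp, mul_pos hcp hrp, mul_pos (show (0:ℝ) < lam + m by linarith) hχpos]
    · exact h1
  have hχ0 : ‖χ c‖ ^ 2 = 0 := by rw [hχc]; simp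
  have hsval : sf φ χ c = ‖φ c‖ ^ 2 := by rw [sf, hχ0]; ring
  rw [hχ0, hsval] at hH
  -- hH : lam * ‖φ c‖^2 + (p-1)/p * (‖φ c‖^2)^(p/(p-1)) - m * (‖φ c‖^2 - 0) = 0
  set S := ‖φ c‖ ^ 2 with hS
  have hSpos : 0 < S := hsval ▸ hsc
  have hp1 : (0:ℝ) < p - 1 := by linarith
  have hpp : (0:ℝ) < p := by linarith
  have hsplit : S ^ (p / (p - 1)) = S * S ^ (1 / (p - 1)) := by
    rw [show p / (p - 1) = 1 + 1 / (p - 1) by field_simp [hp1.ne']; ring]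
    rw [Real.rpow_add hSpos, Real.rpow_one]
  rw [hsplit] at hH
  have h2 : ((p - 1) / p * S ^ (1 / (p - 1))) * S = (m - lam) * S := by
    linear_combination hH
  have h3 : (p - 1) / p * S ^ (1 / (p - 1)) = m - lam := mul_right_cancel₀ hSpos.ne' h2
  have hq : S ^ (1 / (p - 1)) = (m - lam) * p / (p - 1) := by
    field_simp at h3 ⊢
    linear_combination h3
  have hfinal : S = ((m - lam) * p / (p - 1)) ^ (p - 1 : ℝ) := by
    have h1 : (S ^ (1 / (p - 1))) ^ (p - 1 : ℝ) = S := by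
      rw [← Real.rpow_mul hSpos.le]
      rw [show 1 / (p - 1) * (p - 1) = 1 by field_simp]
      exact Real.rpow_one S
    rw [← h1, hq]
  exact ⟨c, hχc, hfinal⟩

theorem normsq_diff_le {z w : ℂ} {B : ℝ} (hz : ‖z‖ ≤ B) (hw : ‖w‖ ≤ B) :
    |‖z‖ ^ 2 - ‖w‖ ^ 2| ≤ 2 * B * ‖z - w‖ := by
  have hB : 0 ≤ B := le_trans (norm_nonneg z) hz
  have h1 : |‖z‖ - ‖w‖| ≤ ‖z - w‖ := abs_norm_sub_norm_le z w
  have h2 : |‖z‖ ^ 2 - ‖w‖ ^ 2| = (‖z‖ + ‖w‖) * |‖z‖ - ‖w‖| := by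
    rw [show ‖z‖ ^ 2 - ‖w‖ ^ 2 = (‖z‖ + ‖w‖) * (‖z‖ - ‖w‖) by ring, abs_mul,
      abs_of_nonneg (by positivity)]
  rw [h2]
  calc (‖z‖ + ‖w‖) * |‖z‖ - ‖w‖| ≤ (2 * B) * ‖z - w‖ := by
        apply mul_le_mul (by linarith) h1 (abs_nonneg _) (by positivity)
    _ = 2 * B * ‖z - w‖ := rfl

theorem rpow_lipschitz {q δ M : ℝ} (hq : 0 < q) (hδ : 0 < δ) {u v : ℝ}
    (hu : u ∈ Icc δ M) (hv : v ∈ Icc δ M) :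
    |u ^ q - v ^ q| ≤ (q * (δ ^ (q - 1) + M ^ (q - 1))) * |u - v| := by
  have hM : 0 ≤ M := le_trans hδ.le (le_trans hu.1 hu.2)
  have hbound : ∀ t ∈ Icc δ M, ‖q * t ^ (q - 1)‖ ≤ q * (δ ^ (q - 1) + M ^ (q - 1)) := by
    intro t ht
    have ht0 : 0 < t := lt_of_lt_of_le hδ ht.1
    rw [Real.norm_eq_abs, abs_mul, abs_of_pos hq, abs_of_nonneg (Real.rpow_nonneg ht0.le _)]
    apply mul_le_mul_of_nonneg_left _ hq.le
    rcases le_total 1 q with h | h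
    · have h1 : t ^ (q - 1) ≤ M ^ (q - 1) := Real.rpow_le_rpow ht0.le ht.2 (by linarith)
      have h2 : 0 ≤ δ ^ (q - 1 : ℝ) := Real.rpow_nonneg hδ.le _
      linarith
    · have h1 : t ^ (q - 1) ≤ δ ^ (q - 1) := Real.rpow_le_rpow_of_nonpos hδ ht.1 (by linarith)
      have h2 : 0 ≤ M ^ (q - 1 : ℝ) := Real.rpow_nonneg hM _
      linarith
  have := Convex.norm_image_sub_le_of_norm_hasDerivWithin_le (f := fun t : ℝ => t ^ q)
    (f' := fun t => q * t ^ (q - 1)) (s := Icc δ M) (C := q * (δ ^ (q - 1) + M ^ (q - 1)))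
    (fun t ht => (Real.hasDerivAt_rpow_const
      (Or.inl (lt_of_lt_of_le hδ ht.1).ne')).hasDerivWithinAt)
    hbound (convex_Icc δ M) hv hu
  simpa [Real.norm_eq_abs] using this

theorem Sol.unique_of_eq_at_zero {φ₁ χ₁ φ₂ χ₂ : ℝ → ℂ} (h₁ : Sol m lam p φ₁ χ₁)
    (h₂ : Sol m lam p φ₂ χ₂) (hm : 0 < m) (hp : 1 < p)
    (hs₁ : ∀ x, 0 < sf φ₁ χ₁ x) (hs₂ : ∀ x, 0 < sf φ₂ χ₂ x)
    (h0φ : φ₁ 0 = φ₂ 0) (h0χ : χ₁ 0 = χ₂ 0) (x : ℝ) : φ₁ x = φ₂ x ∧ χ₁ x = χ₂ x := by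
  have hq : 0 < 1 / (p - 1) := div_pos one_pos (by linarith)
  suffices hclaim : ∀ T : ℝ, 0 < T → ∀ y, |y| ≤ T → φ₁ y = φ₂ y ∧ χ₁ y = χ₂ y by
    exact hclaim (|x| + 1) (by positivity) x (by linarith)
  intro T hT
  have h0mem : (0:ℝ) ∈ Icc (-T) T := ⟨by linarith, hT.le⟩
  -- upper bound on s₁, s₂
  obtain ⟨M₁, hM₁⟩ := isCompact_Icc.exists_bound_of_continuousOn
    (h₁.s_continuous.continuousOn (s := Icc (-T) T))
  obtain ⟨M₂, hM₂⟩ := isCompact_Icc.exists_bound_of_continuousOn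
    (h₂.s_continuous.continuousOn (s := Icc (-T) T))
  -- lower bound
  obtain ⟨c₁, hc₁mem, hc₁min⟩ := isCompact_Icc.exists_isMinOn ⟨0, h0mem⟩
    (h₁.s_continuous.continuousOn (s := Icc (-T) T))
  obtain ⟨c₂, hc₂mem, hc₂min⟩ := isCompact_Icc.exists_isMinOn ⟨0, h0mem⟩
    (h₂.s_continuous.continuousOn (s := Icc (-T) T))
  set δ : ℝ := min (sf φ₁ χ₁ c₁) (sf φ₂ χ₂ c₂) with hδdef
  have hδ : 0 < δ := lt_min (hs₁ c₁) (hs₂ c₂)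
  set M : ℝ := max (max M₁ M₂) δ with hMdef
  have hδM : δ ≤ M := le_max_right _ _
  have hMpos : 0 < M := lt_of_lt_of_le hδ hδM
  have hsmem₁ : ∀ y ∈ Icc (-T) T, sf φ₁ χ₁ y ∈ Icc δ M := by
    intro y hy
    refine ⟨le_trans (min_le_left _ _) (hc₁min hy), ?_⟩
    have := hM₁ y hy
    rw [Real.norm_eq_abs, abs_le] at this
    calc sf φ₁ χ₁ y ≤ M₁ := this.2
      _ ≤ M := le_trans (le_max_left _ _) (le_max_left _ _)
  have hsmem₂ : ∀ y ∈ Icc (-T) T, sf φ₂ χ₂ y ∈ Icc δ M := by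
    intro y hy
    refine ⟨le_trans (min_le_right _ _) (hc₂min hy), ?_⟩
    have := hM₂ y hy
    rw [Real.norm_eq_abs, abs_le] at this
    calc sf φ₂ χ₂ y ≤ M₂ := this.2
      _ ≤ M := le_trans (le_max_right _ _) (le_max_left _ _)
  set B : ℝ := Real.sqrt M with hBdef
  have hBpos : 0 < B := Real.sqrt_pos.mpr hMpos
  have hnormB : ∀ y ∈ Icc (-T) T, ‖φ₁ y‖ ≤ B ∧ ‖χ₁ y‖ ≤ B ∧ ‖φ₂ y‖ ≤ B ∧ ‖χ₂ y‖ ≤ B := by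
    intro y hy
    have k₁ := (hsmem₁ y hy).2
    have k₂ := (hsmem₂ y hy).2
    simp only [sf] at k₁ k₂
    have e : ∀ z : ℂ, ‖z‖ ^ 2 ≤ M → ‖z‖ ≤ B := by
      intro z hz
      rw [hBdef, show ‖z‖ = Real.sqrt (‖z‖ ^ 2) by
        rw [Real.sqrt_sq (norm_nonneg z)]]
      exact Real.sqrt_le_sqrt hz
    refine ⟨e _ ?_, e _ ?_, e _ ?_, e _ ?_⟩ <;>
      [nlinarith [sq_nonneg ‖χ₁ y‖, k₁]; nlinarith [sq_nonneg ‖φ₁ y‖, k₁];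
       nlinarith [sq_nonneg ‖χ₂ y‖, k₂]; nlinarith [sq_nonneg ‖φ₂ y‖, k₂]]
  set L : ℝ := (1 / (p - 1)) * (δ ^ (1 / (p - 1) - 1) + M ^ (1 / (p - 1) - 1)) with hLdef
  have hLpos : 0 < L := by
    apply mul_pos hq
    have := Real.rpow_pos_of_pos hδ (1 / (p - 1) - 1)
    have := Real.rpow_pos_of_pos hMpos (1 / (p - 1) - 1)
    linarith
  set Ca : ℝ := |lam| + m + M ^ (1 / (p - 1)) with hCadef
  have habs : ∀ t : ℝ, 0 ≤ t → t ≤ M ^ (1 / (p - 1)) →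
      |lam + m + t| ≤ Ca ∧ |lam - m + t| ≤ Ca := by
    intro t ht1 ht2
    have hl1 := le_abs_self lam
    have hl2 := neg_abs_le lam
    constructor <;> (rw [abs_le]; constructor <;> (simp only [hCadef]; linarith))
  have hCa : ∀ y ∈ Icc (-T) T,
      |af m lam p φ₁ χ₁ y| ≤ Ca ∧ |bf m lam p φ₁ χ₁ y| ≤ Ca ∧
      |af m lam p φ₂ χ₂ y| ≤ Ca ∧ |bf m lam p φ₂ χ₂ y| ≤ Ca := by
    intro y hy
    have k₁ := hsmem₁ y hy
    have k₂ := hsmem₂ y hy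
    have r₁ : sf φ₁ χ₁ y ^ (1 / (p - 1)) ≤ M ^ (1 / (p - 1)) :=
      Real.rpow_le_rpow (le_trans hδ.le k₁.1) k₁.2 hq.le
    have r₂ : sf φ₂ χ₂ y ^ (1 / (p - 1)) ≤ M ^ (1 / (p - 1)) :=
      Real.rpow_le_rpow (le_trans hδ.le k₂.1) k₂.2 hq.le
    have n₁ : 0 ≤ sf φ₁ χ₁ y ^ (1 / (p - 1)) := Real.rpow_nonneg (le_trans hδ.le k₁.1) _
    have n₂ : 0 ≤ sf φ₂ χ₂ y ^ (1 / (p - 1)) := Real.rpow_nonneg (le_trans hδ.le k₂.1) _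
    simp only [af, bf]
    exact ⟨(habs _ n₁ r₁).1, (habs _ n₁ r₁).2, (habs _ n₂ r₂).1, (habs _ n₂ r₂).2⟩
  -- the difference function
  set D : ℝ → ℂ × ℂ := fun y => (φ₁ y - φ₂ y, χ₁ y - χ₂ y) with hDdef
  set D' : ℝ → ℂ × ℂ := fun y =>
    (-(af m lam p φ₁ χ₁ y : ℂ) * χ₁ y + (af m lam p φ₂ χ₂ y : ℂ) * χ₂ y,
     (bf m lam p φ₁ χ₁ y : ℂ) * φ₁ y - (bf m lam p φ₂ χ₂ y : ℂ) * φ₂ y) with hD'def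
  have hDd : ∀ y, HasDerivAt D (D' y) y := by
    intro y
    apply HasDerivAt.prodMk
    · have := (h₁.hasDerivAt_phi y).sub (h₂.hasDerivAt_phi y)
      convert this using 1
      · rfl
      ring
    · exact (h₁.hasDerivAt_chi y).sub (h₂.hasDerivAt_chi y)
  set K : ℝ := Ca + 4 * L * B ^ 2 with hKdef
  have hKpos : 0 < K := by
    have : 0 ≤ Ca := by
      have := Real.rpow_nonneg hMpos.le (1 / (p - 1))
      have := abs_nonneg lam
      simp only [hCadef]; linarith
    have : 0 < 4 * L * B ^ 2 := by positivity
    linarith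
  -- the key derivative bound on the compact interval
  have hbound : ∀ y ∈ Icc (-T) T, ‖D' y‖ ≤ K * ‖D y‖ := by
    intro y hy
    obtain ⟨e1, e2, e3, e4⟩ := hnormB y hy
    obtain ⟨f1, f2, f3, f4⟩ := hCa y hy
    have hdiffs : |sf φ₁ χ₁ y - sf φ₂ χ₂ y|
        ≤ 2 * B * ‖φ₁ y - φ₂ y‖ + 2 * B * ‖χ₁ y - χ₂ y‖ := by
      have g1 := normsq_diff_le e1 e3
      have g2 := normsq_diff_le e2 e4
      have : sf φ₁ χ₁ y - sf φ₂ χ₂ y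
          = (‖φ₁ y‖ ^ 2 - ‖φ₂ y‖ ^ 2) + (‖χ₁ y‖ ^ 2 - ‖χ₂ y‖ ^ 2) := by
        simp only [sf]; ring
      rw [this]
      calc |(‖φ₁ y‖ ^ 2 - ‖φ₂ y‖ ^ 2) + (‖χ₁ y‖ ^ 2 - ‖χ₂ y‖ ^ 2)|
          ≤ |‖φ₁ y‖ ^ 2 - ‖φ₂ y‖ ^ 2| + |‖χ₁ y‖ ^ 2 - ‖χ₂ y‖ ^ 2| := abs_add_le _ _
        _ ≤ 2 * B * ‖φ₁ y - φ₂ y‖ + 2 * B * ‖χ₁ y - χ₂ y‖ := by linarith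
    have hrl := rpow_lipschitz hq hδ (hsmem₁ y hy) (hsmem₂ y hy)
    have haf : |af m lam p φ₁ χ₁ y - af m lam p φ₂ χ₂ y|
        ≤ L * |sf φ₁ χ₁ y - sf φ₂ χ₂ y| := by
      have e : af m lam p φ₁ χ₁ y - af m lam p φ₂ χ₂ y
          = sf φ₁ χ₁ y ^ (1 / (p - 1)) - sf φ₂ χ₂ y ^ (1 / (p - 1)) := by
        simp only [af]; ring
      rw [e, hLdef]
      exact hrl
    have hbf : |bf m lam p φ₁ χ₁ y - bf m lam p φ₂ χ₂ y|
        ≤ L * |sf φ₁ χ₁ y - sf φ₂ χ₂ y| := by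
      have e : bf m lam p φ₁ χ₁ y - bf m lam p φ₂ χ₂ y
          = sf φ₁ χ₁ y ^ (1 / (p - 1)) - sf φ₂ χ₂ y ^ (1 / (p - 1)) := by
        simp only [bf]; ring
      rw [e, hLdef]
      exact hrl
    -- assemble the bound
    have hnφ : ‖φ₁ y - φ₂ y‖ ≤ ‖D y‖ := norm_fst_le (D y)
    have hnχ : ‖χ₁ y - χ₂ y‖ ≤ ‖D y‖ := norm_snd_le (D y)
    have hCann : 0 ≤ Ca := le_trans (abs_nonneg _) f1
    have hc1 : ‖(D' y).1‖ ≤ Ca * ‖χ₁ y - χ₂ y‖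
        + (L * |sf φ₁ χ₁ y - sf φ₂ χ₂ y|) * B := by
      have e : (D' y).1 = -(af m lam p φ₁ χ₁ y : ℂ) * (χ₁ y - χ₂ y)
          + ((af m lam p φ₂ χ₂ y - af m lam p φ₁ χ₁ y : ℝ) : ℂ) * χ₂ y := by
        show -(af m lam p φ₁ χ₁ y : ℂ) * χ₁ y + (af m lam p φ₂ χ₂ y : ℂ) * χ₂ y = _
        push_cast; ring
      calc ‖(D' y).1‖ ≤ ‖-(af m lam p φ₁ χ₁ y : ℂ) * (χ₁ y - χ₂ y)‖
            + ‖((af m lam p φ₂ χ₂ y - af m lam p φ₁ χ₁ y : ℝ) : ℂ) * χ₂ y‖ := by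
            rw [e]; exact norm_add_le _ _
        _ = |af m lam p φ₁ χ₁ y| * ‖χ₁ y - χ₂ y‖
            + |af m lam p φ₂ χ₂ y - af m lam p φ₁ χ₁ y| * ‖χ₂ y‖ := by
            simp [norm_mul, Complex.norm_real, Real.norm_eq_abs, ← Complex.ofReal_sub,
              Complex.norm_real]
        _ ≤ Ca * ‖χ₁ y - χ₂ y‖ + (L * |sf φ₁ χ₁ y - sf φ₂ χ₂ y|) * B := by
            apply add_le_add
            · exact mul_le_mul_of_nonneg_right f1 (norm_nonneg _)
            · rw [abs_sub_comm]
              exact mul_le_mul haf e4 (norm_nonneg _)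
                (mul_nonneg hLpos.le (abs_nonneg _))
    have hc2 : ‖(D' y).2‖ ≤ Ca * ‖φ₁ y - φ₂ y‖
        + (L * |sf φ₁ χ₁ y - sf φ₂ χ₂ y|) * B := by
      have e : (D' y).2 = (bf m lam p φ₁ χ₁ y : ℂ) * (φ₁ y - φ₂ y)
          + ((bf m lam p φ₁ χ₁ y - bf m lam p φ₂ χ₂ y : ℝ) : ℂ) * φ₂ y := by
        show (bf m lam p φ₁ χ₁ y : ℂ) * φ₁ y - (bf m lam p φ₂ χ₂ y : ℂ) * φ₂ y = _
        push_cast; ring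
      calc ‖(D' y).2‖ ≤ ‖(bf m lam p φ₁ χ₁ y : ℂ) * (φ₁ y - φ₂ y)‖
            + ‖((bf m lam p φ₁ χ₁ y - bf m lam p φ₂ χ₂ y : ℝ) : ℂ) * φ₂ y‖ := by
            rw [e]; exact norm_add_le _ _
        _ = |bf m lam p φ₁ χ₁ y| * ‖φ₁ y - φ₂ y‖
            + |bf m lam p φ₁ χ₁ y - bf m lam p φ₂ χ₂ y| * ‖φ₂ y‖ := by
            simp [norm_mul, Complex.norm_real, Real.norm_eq_abs, ← Complex.ofReal_sub,
              Complex.norm_real]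
        _ ≤ Ca * ‖φ₁ y - φ₂ y‖ + (L * |sf φ₁ χ₁ y - sf φ₂ χ₂ y|) * B := by
            apply add_le_add
            · exact mul_le_mul_of_nonneg_right f2 (norm_nonneg _)
            · exact mul_le_mul hbf e3 (norm_nonneg _)
                (mul_nonneg hLpos.le (abs_nonneg _))
    have hsecond : (L * |sf φ₁ χ₁ y - sf φ₂ χ₂ y|) * B ≤ 4 * L * B ^ 2 * ‖D y‖ := by
      have hLB : 0 ≤ L * B := mul_nonneg hLpos.le hBpos.le
      have step : |sf φ₁ χ₁ y - sf φ₂ χ₂ y| ≤ 4 * B * ‖D y‖ := by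
        calc |sf φ₁ χ₁ y - sf φ₂ χ₂ y|
            ≤ 2 * B * ‖φ₁ y - φ₂ y‖ + 2 * B * ‖χ₁ y - χ₂ y‖ := hdiffs
          _ ≤ 2 * B * ‖D y‖ + 2 * B * ‖D y‖ := by
              apply add_le_add <;> exact mul_le_mul_of_nonneg_left (by assumption)
                (by positivity)
          _ = 4 * B * ‖D y‖ := by ring
      calc (L * |sf φ₁ χ₁ y - sf φ₂ χ₂ y|) * B
          = (L * B) * |sf φ₁ χ₁ y - sf φ₂ χ₂ y| := by ring
        _ ≤ (L * B) * (4 * B * ‖D y‖) := mul_le_mul_of_nonneg_left step hLB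
        _ = 4 * L * B ^ 2 * ‖D y‖ := by ring
    have hfinal1 : ‖(D' y).1‖ ≤ K * ‖D y‖ := by
      rw [hKdef]
      calc ‖(D' y).1‖ ≤ Ca * ‖χ₁ y - χ₂ y‖
            + (L * |sf φ₁ χ₁ y - sf φ₂ χ₂ y|) * B := hc1
        _ ≤ Ca * ‖D y‖ + 4 * L * B ^ 2 * ‖D y‖ :=
            add_le_add (mul_le_mul_of_nonneg_left hnχ hCann) hsecond
        _ = (Ca + 4 * L * B ^ 2) * ‖D y‖ := by ring
    have hfinal2 : ‖(D' y).2‖ ≤ K * ‖D y‖ := by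
      rw [hKdef]
      calc ‖(D' y).2‖ ≤ Ca * ‖φ₁ y - φ₂ y‖
            + (L * |sf φ₁ χ₁ y - sf φ₂ χ₂ y|) * B := hc2
        _ ≤ Ca * ‖D y‖ + 4 * L * B ^ 2 * ‖D y‖ :=
            add_le_add (mul_le_mul_of_nonneg_left hnφ hCann) hsecond
        _ = (Ca + 4 * L * B ^ 2) * ‖D y‖ := by ring
    calc ‖D' y‖ = max ‖(D' y).1‖ ‖(D' y).2‖ := by rw [Prod.norm_def]
      _ ≤ K * ‖D y‖ := max_le hfinal1 hfinal2
  -- Grönwall forward and backward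
  have hD0 : ‖D 0‖ ≤ 0 := by
    have : D 0 = 0 := by
      simp only [hDdef, h0φ, h0χ, sub_self]
      rfl
    rw [this, norm_zero]
  have hfor : ∀ t ∈ Icc (0:ℝ) T, D t = 0 := by
    have hG := norm_le_gronwallBound_of_norm_deriv_right_le (f := D) (f' := D')
      (δ := 0) (K := K) (ε := 0) (a := 0) (b := T)
      (fun u _ => (hDd u).continuousAt.continuousWithinAt)
      (fun u _ => (hDd u).hasDerivWithinAt)
      hD0
      (fun u hu => by
        rw [add_zero]
        exact hbound u ⟨by linarith [hu.1], hu.2.le⟩)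
    intro t ht
    have := hG t ht
    rw [gronwallBound_ε0, zero_mul] at this
    exact norm_le_zero_iff.mp this
  have hback : ∀ t ∈ Icc (0:ℝ) T, D (-t) = 0 := by
    have hEd : ∀ t : ℝ, HasDerivAt (fun u => D (-u)) ((-1 : ℝ) • D' (-t)) t := by
      intro t
      exact (hDd (-t)).scomp t (hasDerivAt_neg t)
    have hG := norm_le_gronwallBound_of_norm_deriv_right_le (f := fun u => D (-u))
      (f' := fun u => (-1 : ℝ) • D' (-u))
      (δ := 0) (K := K) (ε := 0) (a := 0) (b := T)
      (fun u _ => (hEd u).continuousAt.continuousWithinAt)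
      (fun u _ => (hEd u).hasDerivWithinAt)
      (by simpa using hD0)
      (fun u hu => by
        rw [add_zero]
        have : ‖(-1 : ℝ) • D' (-u)‖ = ‖D' (-u)‖ := by
          rw [norm_smul]; simp
        rw [this]
        exact hbound (-u) ⟨by linarith [hu.2], by linarith [hu.1]⟩)
    intro t ht
    have := hG t ht
    rw [gronwallBound_ε0, zero_mul] at this
    exact norm_le_zero_iff.mp this
  intro y hyT
  have hDy : D y = 0 := by
    rcases le_or_gt 0 y with hy0 | hy0
    · exact hfor y ⟨hy0, by rwa [abs_of_nonneg hy0] at hyT⟩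
    · have := hback (-y) ⟨by linarith, by rwa [abs_of_neg hy0] at hyT⟩
      simpa using this
  constructor
  · have : (D y).1 = 0 := by rw [hDy]; rfl
    exact sub_eq_zero.mp this
  · have : (D y).2 = 0 := by rw [hDy]; rfl
    exact sub_eq_zero.mp this

theorem norm_exp_mul (θ : ℝ) (z : ℂ) :
    ‖Complex.exp (-(θ:ℂ) * Complex.I) * z‖ = ‖z‖ := by
  rw [norm_mul]
  have : (-(θ:ℂ)) = ((-θ : ℝ) : ℂ) := by push_cast; ring
  rw [this, Complex.norm_exp_ofReal_mul_I, one_mul]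

theorem Sol.transform (h : Sol m lam p φ χ) (θ c : ℝ) :
    Sol m lam p (fun x => Complex.exp (-(θ:ℂ) * Complex.I) * φ (x + c))
      (fun x => Complex.exp (-(θ:ℂ) * Complex.I) * χ (x + c)) := by
  set e : ℂ := Complex.exp (-(θ:ℂ) * Complex.I) with hedef
  have htr : ContDiff ℝ 1 (fun x : ℝ => x + c) := contDiff_id.add contDiff_const
  have hderφ : ∀ x : ℝ, HasDerivAt (fun y => e * φ (y + c)) (e * deriv φ (x + c)) x := by
    intro x
    have hin : HasDerivAt (fun y : ℝ => y + c) 1 x := (hasDerivAt_id x).add_const c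
    have hφd := ((h.regφ.differentiable one_ne_zero) (x + c)).hasDerivAt
    have hcomp : HasDerivAt (fun y => φ (y + c)) (deriv φ (x + c)) x := by
      exact (hφd.scomp x hin).congr_deriv (one_smul ℝ _)
    exact hcomp.const_mul e
  have hderχ : ∀ x : ℝ, HasDerivAt (fun y => e * χ (y + c)) (e * deriv χ (x + c)) x := by
    intro x
    have hin : HasDerivAt (fun y : ℝ => y + c) 1 x := (hasDerivAt_id x).add_const c
    have hχd := ((h.regχ.differentiable one_ne_zero) (x + c)).hasDerivAt
    have hcomp : HasDerivAt (fun y => χ (y + c)) (deriv χ (x + c)) x := by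
      exact (hχd.scomp x hin).congr_deriv (one_smul ℝ _)
    exact hcomp.const_mul e
  have hnorm : ∀ x : ℝ, ‖e * φ (x + c)‖ = ‖φ (x + c)‖ ∧ ‖e * χ (x + c)‖ = ‖χ (x + c)‖ :=
    fun x => ⟨norm_exp_mul θ _, norm_exp_mul θ _⟩
  refine ⟨contDiff_const.mul (h.regφ.comp htr), contDiff_const.mul (h.regχ.comp htr),
    ?_, ?_⟩
  · intro x
    rw [(hderφ x).deriv, h.odeφ (x + c), (hnorm x).1, (hnorm x).2]
    ring
  · intro x
    rw [(hderχ x).deriv, h.odeχ (x + c), (hnorm x).1, (hnorm x).2]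
    ring

end NLD

open MeasureTheory

/-- **Uniqueness up to phase and translation of the nonzero L² solution of the
one-dimensional nonlinear Dirac system.** -/
theorem oneDim_nonlinear_dirac_uniqueness
    (m lam p : ℝ) (hm : 0 < m) (hlam₁ : -m < lam) (hlam₂ : lam < m) (hp : 1 < p)
    (φ₁ χ₁ φ₂ χ₂ : ℝ → ℂ)
    (hreg₁ : ContDiff ℝ 1 φ₁ ∧ ContDiff ℝ 1 χ₁)
    (hreg₂ : ContDiff ℝ 1 φ₂ ∧ ContDiff ℝ 1 χ₂)
    (hL2₁ : MemLp φ₁ 2 volume ∧ MemLp χ₁ 2 volume)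
    (hL2₂ : MemLp φ₂ 2 volume ∧ MemLp χ₂ 2 volume)
    (hne₁ : ¬ (∀ x, φ₁ x = 0 ∧ χ₁ x = 0))
    (hne₂ : ¬ (∀ x, φ₂ x = 0 ∧ χ₂ x = 0))
    (hode₁ : ∀ x, deriv φ₁ x
        = -(((lam + m + (‖φ₁ x‖ ^ 2 + ‖χ₁ x‖ ^ 2) ^ (1 / (p - 1)) : ℝ)) : ℂ) * χ₁ x)
    (hode₁' : ∀ x, deriv χ₁ x
        = (((lam - m + (‖φ₁ x‖ ^ 2 + ‖χ₁ x‖ ^ 2) ^ (1 / (p - 1)) : ℝ)) : ℂ) * φ₁ x)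
    (hode₂ : ∀ x, deriv φ₂ x
        = -(((lam + m + (‖φ₂ x‖ ^ 2 + ‖χ₂ x‖ ^ 2) ^ (1 / (p - 1)) : ℝ)) : ℂ) * χ₂ x)
    (hode₂' : ∀ x, deriv χ₂ x
        = (((lam - m + (‖φ₂ x‖ ^ 2 + ‖χ₂ x‖ ^ 2) ^ (1 / (p - 1)) : ℝ)) : ℂ) * φ₂ x) :
    ∃ θ x₀ : ℝ, ∀ x : ℝ,
      φ₂ x = Complex.exp (θ * Complex.I) * φ₁ (x - x₀) ∧
      χ₂ x = Complex.exp (θ * Complex.I) * χ₁ (x - x₀) := by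
  have h₁ : NLD.Sol m lam p φ₁ χ₁ := ⟨hreg₁.1, hreg₁.2, hode₁, hode₁'⟩
  have h₂ : NLD.Sol m lam p φ₂ χ₂ := ⟨hreg₂.1, hreg₂.2, hode₂, hode₂'⟩
  obtain ⟨c₁, hχc₁, hφc₁⟩ := h₁.exists_center hm hp hlam₁ hlam₂ hne₁ hL2₁.1 hL2₁.2
  obtain ⟨c₂, hχc₂, hφc₂⟩ := h₂.exists_center hm hp hlam₁ hlam₂ hne₂ hL2₂.1 hL2₂.2
  set θ₁ : ℝ := Complex.arg (φ₁ c₁) with hθ₁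
  set θ₂ : ℝ := Complex.arg (φ₂ c₂) with hθ₂
  have hT₁ := h₁.transform θ₁ c₁
  have hT₂ := h₂.transform θ₂ c₂
  have hsp₁ : ∀ x, 0 < NLD.sf (fun x => Complex.exp (-(θ₁:ℂ) * Complex.I) * φ₁ (x + c₁))
      (fun x => Complex.exp (-(θ₁:ℂ) * Complex.I) * χ₁ (x + c₁)) x := by
    intro x
    have he : NLD.sf (fun x => Complex.exp (-(θ₁:ℂ) * Complex.I) * φ₁ (x + c₁))
        (fun x => Complex.exp (-(θ₁:ℂ) * Complex.I) * χ₁ (x + c₁)) x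
        = NLD.sf φ₁ χ₁ (x + c₁) := by
      simp only [NLD.sf, NLD.norm_exp_mul]
    rw [he]
    exact h₁.s_pos hm hne₁ _
  have hsp₂ : ∀ x, 0 < NLD.sf (fun x => Complex.exp (-(θ₂:ℂ) * Complex.I) * φ₂ (x + c₂))
      (fun x => Complex.exp (-(θ₂:ℂ) * Complex.I) * χ₂ (x + c₂)) x := by
    intro x
    have he : NLD.sf (fun x => Complex.exp (-(θ₂:ℂ) * Complex.I) * φ₂ (x + c₂))
        (fun x => Complex.exp (-(θ₂:ℂ) * Complex.I) * χ₂ (x + c₂)) x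
        = NLD.sf φ₂ χ₂ (x + c₂) := by
      simp only [NLD.sf, NLD.norm_exp_mul]
    rw [he]
    exact h₂.s_pos hm hne₂ _
  have hval : ∀ (φ : ℝ → ℂ) (c : ℝ),
      ‖φ c‖ ^ 2 = ((m - lam) * p / (p - 1)) ^ (p - 1 : ℝ) →
      Complex.exp (-((Complex.arg (φ c) : ℝ) : ℂ) * Complex.I) * φ (0 + c)
        = ((Real.sqrt (((m - lam) * p / (p - 1)) ^ (p - 1 : ℝ)) : ℝ) : ℂ) := by
    intro φ c hc
    rw [zero_add]
    set a : ℝ := Complex.arg (φ c) with ha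
    have harg := Complex.norm_mul_exp_arg_mul_I (φ c)
    rw [← harg]
    have h2 : Complex.exp (-(a : ℂ) * Complex.I)
        * (((‖φ c‖ : ℝ) : ℂ) * Complex.exp ((a : ℂ) * Complex.I))
        = ((‖φ c‖ : ℝ) : ℂ) := by
      rw [neg_mul, Complex.exp_neg]
      field_simp
    rw [h2]
    congr 1
    rw [← Real.sqrt_sq (norm_nonneg (φ c)), hc]
  have h0φ : Complex.exp (-(θ₁:ℂ) * Complex.I) * φ₁ (0 + c₁)
      = Complex.exp (-(θ₂:ℂ) * Complex.I) * φ₂ (0 + c₂) :=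
    (hval φ₁ c₁ hφc₁).trans (hval φ₂ c₂ hφc₂).symm
  have h0χ : Complex.exp (-(θ₁:ℂ) * Complex.I) * χ₁ (0 + c₁)
      = Complex.exp (-(θ₂:ℂ) * Complex.I) * χ₂ (0 + c₂) := by
    rw [zero_add, zero_add, hχc₁, hχc₂, mul_zero, mul_zero]
  have huniq := NLD.Sol.unique_of_eq_at_zero hT₁ hT₂ hm hp hsp₁ hsp₂ h0φ h0χ
  refine ⟨θ₂ - θ₁, c₂ - c₁, fun x => ?_⟩
  obtain ⟨k1', k2'⟩ := huniq (x - c₂)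
  have k1 : Complex.exp (-(θ₁:ℂ) * Complex.I) * φ₁ (x - c₂ + c₁)
      = Complex.exp (-(θ₂:ℂ) * Complex.I) * φ₂ (x - c₂ + c₂) := k1'
  have k2 : Complex.exp (-(θ₁:ℂ) * Complex.I) * χ₁ (x - c₂ + c₁)
      = Complex.exp (-(θ₂:ℂ) * Complex.I) * χ₂ (x - c₂ + c₂) := k2'
  rw [show x - c₂ + c₂ = x by ring] at k1 k2
  have hexpand : Complex.exp (((θ₂ - θ₁ : ℝ) : ℂ) * Complex.I)
      = Complex.exp ((θ₂:ℂ) * Complex.I) * Complex.exp (-(θ₁:ℂ) * Complex.I) := by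
    rw [← Complex.exp_add]
    congr 1
    push_cast
    ring
  constructor
  · rw [show x - (c₂ - c₁) = x - c₂ + c₁ by ring, hexpand, mul_assoc, k1, ← mul_assoc,
      ← Complex.exp_add, show (θ₂:ℂ) * Complex.I + -(θ₂:ℂ) * Complex.I = 0 by ring,
      Complex.exp_zero, one_mul]
  · rw [show x - (c₂ - c₁) = x - c₂ + c₁ by ring, hexpand, mul_assoc, k2, ← mul_assoc,
      ← Complex.exp_add, show (θ₂:ℂ) * Complex.I + -(θ₂:ℂ) * Complex.I = 0 by ring,
      Complex.exp_zero, one_mul]
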